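/- (Theorem 5) If μ* is constant over Θ (i.e., the value of the optimal mean is known), then for every β > 0 there exist C, C̃ > 0 such that for all θ ∈ Θ with Δ ≠ 0, all n ≥ 2, and all k ≠ k*, the GCL* policy satisfies P_θ(T_k(n) ≥ C log(n)/Δ_k²) ≤ C̃/n^β. Explicitly one may take C = 2(β+1) + 1 and C̃ = 2K. -/

import Mathlib

open MeasureTheory ProbabilityTheory Finset

section Aux

open Real

lemma hoeff_log_core (p : ℝ) (hp0 : 0 ≤ p) (hp1 : p ≤ 1) (t : ℝ) (ht : 0 ≤ t) :
    (1 - p) + p * exp t ≤ exp (t * p + t ^ 2 / 8) := by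
  set a : ℝ := 1 - p with ha
  have ha0 : 0 ≤ a := by simp [ha]; linarith
  have hab : a + p = 1 := by ring
  have hpos : ∀ x : ℝ, 0 < a + p * exp x := by
    intro x
    rcases eq_or_lt_of_le hp0 with h | h
    · rw [← h]; simpa [ha] using (by linarith : (0:ℝ) < 1 - p + 0)
    · have : (0:ℝ) < p * exp x := by positivity
      linarith
  clear_value a
  set L : ℝ → ℝ := fun x => log (a + p * exp x) with hL
  set g : ℝ → ℝ := fun x => p * exp x / (a + p * exp x) with hg
  have hLd : ∀ x, HasDerivAt L (g x) x := by
    intro x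
    exact (((Real.hasDerivAt_exp x).const_mul p).const_add a).log (hpos x).ne'
  have hgd : ∀ x, HasDerivAt g (a * (p * exp x) / (a + p * exp x) ^ 2) x := by
    intro x
    have h1 : HasDerivAt (fun x : ℝ => p * exp x) (p * exp x) x :=
      (Real.hasDerivAt_exp x).const_mul p
    have h2 := h1.div (h1.const_add a) (hpos x).ne'
    refine (h2.congr_deriv ?_)
    have := (hpos x).ne'
    ring
  have hgd_le : ∀ x : ℝ, a * (p * exp x) / (a + p * exp x) ^ 2 ≤ 1 / 4 := by
    intro x
    rw [div_le_iff₀ (pow_pos (hpos x) 2)]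
    have key : (1:ℝ) / 4 * (a + p * exp x) ^ 2
        = 1 / 4 * (a - p * exp x) ^ 2 + a * (p * exp x) := by ring
    rw [key]
    have := sq_nonneg (a - p * exp x)
    linarith
  -- Step 1 : g x ≤ p + x / 4 for x ≥ 0
  have step1 : ∀ x : ℝ, 0 ≤ x → g x ≤ p + x / 4 := by
    intro x hx
    set h : ℝ → ℝ := fun y => g y - y / 4 with hh
    have hhd : ∀ y, HasDerivAt h (a * (p * exp y) / (a + p * exp y) ^ 2 - 1 / 4) y := by
      intro y
      exact (hgd y).sub ((hasDerivAt_id y).div_const 4)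
    have hanti : AntitoneOn h (Set.Ici 0) := by
      apply antitoneOn_of_deriv_nonpos (convex_Ici 0)
      · exact fun y _ => ((hhd y).continuousAt).continuousWithinAt
      · exact fun y _ => ((hhd y).differentiableAt).differentiableWithinAt
      · intro y _
        rw [(hhd y).deriv]
        linarith [hgd_le y]
    have hle := hanti (Set.self_mem_Ici) (Set.mem_Ici.2 hx) hx
    have hg0 : g 0 = p := by simp [hg, hab]
    have h00 : h 0 = p := by simp [hh, hg0]
    have hx0 : h x = g x - x / 4 := rfl
    rw [h00, hx0] at hle
    linarith
  -- Step 2 : L x ≤ x * p + x^2/8 for x ≥ 0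
  have step2 : L t ≤ t * p + t ^ 2 / 8 := by
    set F : ℝ → ℝ := fun y => y * p + y ^ 2 / 8 - L y with hF
    have hFd : ∀ y, HasDerivAt F (p + y / 4 - g y) y := by
      intro y
      have h1 : HasDerivAt (fun y : ℝ => y * p + y ^ 2 / 8) (p + y / 4) y := by
        have := ((hasDerivAt_id y).mul_const p).add
          (((hasDerivAt_pow 2 y)).div_const 8)
        refine (this.congr_deriv ?_)
        ring
      exact h1.sub (hLd y)
    have hmono : MonotoneOn F (Set.Ici 0) := by
      apply monotoneOn_of_deriv_nonneg (convex_Ici 0)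
      · exact fun y _ => ((hFd y).continuousAt).continuousWithinAt
      · exact fun y _ => ((hFd y).differentiableAt).differentiableWithinAt
      · intro y hy
        rw [(hFd y).deriv]
        rw [interior_Ici] at hy
        linarith [step1 y (le_of_lt hy)]
    have := hmono Set.self_mem_Ici (Set.mem_Ici.2 ht) ht
    have hF0 : F 0 = 0 := by simp [hF, hL, hab]
    rw [hF0] at this
    simp only [hF] at this
    linarith
  have hpos' := hpos t
  calc a + p * exp t = exp (L t) := (exp_log hpos').symm
    _ ≤ exp (t * p + t ^ 2 / 8) := exp_le_exp.2 step2

variable {Ω : Type*} [MeasurableSpace Ω] (P : Measure Ω) [IsProbabilityMeasure P]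

lemma int_bdd (f : Ω → ℝ) (hf : Measurable f) (C : ℝ) (h : ∀ ω, |f ω| ≤ C) :
    Integrable f P :=
  (integrable_const C).mono' hf.aestronglyMeasurable (ae_of_all _ (by simpa using h))

lemma hoeff_mgf (Y : Ω → ℝ) (hY : Measurable Y) (hrange : ∀ ω, Y ω ∈ Set.Icc (0:ℝ) 1)
    (ν : ℝ) (hν : ∫ ω, Y ω ∂P = ν) (t : ℝ) (ht : 0 ≤ t) :
    mgf (fun ω => Y ω - ν) P t ≤ exp (t ^ 2 / 8) := by
  have hYint : Integrable Y P := int_bdd P Y hY 1 (fun ω => by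
    rcases hrange ω with ⟨h0, h1⟩; rw [abs_le]; constructor <;> linarith)
  have hν0 : 0 ≤ ν := hν ▸ integral_nonneg (fun ω => (hrange ω).1)
  have hν1 : ν ≤ 1 := by
    rw [← hν]
    calc ∫ ω, Y ω ∂P ≤ ∫ _, (1:ℝ) ∂P := integral_mono hYint (integrable_const 1)
          (fun ω => (hrange ω).2)
      _ = 1 := by simp
  have hpt : ∀ ω, exp (t * Y ω) ≤ (1 - Y ω) + Y ω * exp t := by
    intro ω
    rcases hrange ω with ⟨h0, h1⟩
    have := convexOn_exp.2 (Set.mem_univ (0:ℝ)) (Set.mem_univ t)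
      (by linarith : (0:ℝ) ≤ 1 - Y ω) h0 (by ring)
    simpa [smul_eq_mul, mul_comm] using this
  have hint1 : Integrable (fun ω => exp (t * Y ω)) P := by
    apply int_bdd P _ ((hY.const_mul t).exp) (exp t)
    intro ω
    rw [abs_of_pos (exp_pos _), exp_le_exp]
    rcases hrange ω with ⟨h0, h1⟩
    nlinarith
  have hint2 : Integrable (fun ω => (1 - Y ω) + Y ω * exp t) P :=
    ((integrable_const 1).sub hYint).add (hYint.mul_const _)
  have hIle : ∫ ω, exp (t * Y ω) ∂P ≤ (1 - ν) + ν * exp t := by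
    calc ∫ ω, exp (t * Y ω) ∂P ≤ ∫ ω, ((1 - Y ω) + Y ω * exp t) ∂P :=
          integral_mono hint1 hint2 hpt
      _ = (1 - ν) + ν * exp t := by
          have e1 : ∫ ω, ((1 - Y ω) + Y ω * exp t) ∂P
              = (∫ ω, (1 - Y ω) ∂P) + ∫ ω, Y ω * exp t ∂P :=
            integral_add ((integrable_const 1).sub hYint) (hYint.mul_const _)
          have e2 : ∫ ω, (1 - Y ω) ∂P = (∫ _, (1:ℝ) ∂P) - ∫ ω, Y ω ∂P :=
            integral_sub (integrable_const 1) hYint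
          rw [e1, e2, integral_mul_const, hν]
          simp
  have hcore := hoeff_log_core ν hν0 hν1 t ht
  have : mgf (fun ω => Y ω - ν) P t = exp (-(t*ν)) * ∫ ω, exp (t * Y ω) ∂P := by
    rw [mgf, ← integral_const_mul]
    congr 1 with ω
    rw [← exp_add]
    ring_nf
  rw [this]
  calc exp (-(t*ν)) * ∫ ω, exp (t * Y ω) ∂P ≤ exp (-(t*ν)) * ((1 - ν) + ν * exp t) := by
        apply mul_le_mul_of_nonneg_left hIle (exp_pos _).le
    _ ≤ exp (-(t*ν)) * exp (t * ν + t ^ 2 / 8) :=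
        mul_le_mul_of_nonneg_left hcore (exp_pos _).le
    _ = exp (t ^ 2 / 8) := by rw [← exp_add]; ring_nf

lemma chernoff_sum (Y : ℕ → Ω → ℝ) (hmeas : ∀ i, Measurable (Y i))
    (hindep : iIndepFun Y P)
    (hrange : ∀ i ω, Y i ω ∈ Set.Icc (0:ℝ) 1)
    (ν : ℕ → ℝ) (hmean : ∀ i, ∫ ω, Y i ω ∂P = ν i)
    (s : Finset ℕ) (hs : 0 < s.card) (ε : ℝ) (hε : 0 ≤ ε) :
    (P {ω | ε ≤ ∑ i ∈ s, (Y i ω - ν i)}).toReal ≤ exp (-2 * ε ^ 2 / s.card) := by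
  set c : ℝ := (s.card : ℝ) with hc
  have hc0 : 0 < c := by rw [hc]; exact_mod_cast hs
  set lam : ℝ := 4 * ε / c with hlam
  have hlam0 : 0 ≤ lam := by positivity
  set Z : ℕ → Ω → ℝ := fun i ω => Y i ω - ν i with hZ
  have hZmeas : ∀ i, Measurable (Z i) := fun i => (hmeas i).sub_const _
  have hZindep : iIndepFun Z P :=
    hindep.comp (fun i x => x - ν i) (fun i => measurable_id.sub_const _)
  have hν01 : ∀ i, 0 ≤ ν i ∧ ν i ≤ 1 := by
    intro i
    constructor
    · exact (hmean i) ▸ integral_nonneg (fun ω => (hrange i ω).1)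
    · rw [← hmean i]
      calc ∫ ω, Y i ω ∂P ≤ ∫ _, (1:ℝ) ∂P := integral_mono
            (int_bdd P _ (hmeas i) 1 (fun ω => by
              rcases hrange i ω with ⟨h0, h1⟩; rw [abs_le]; exact ⟨by linarith, h1⟩))
            (integrable_const 1) (fun ω => (hrange i ω).2)
        _ = 1 := by simp
  have hZbd : ∀ i ω, |Z i ω| ≤ 1 := by
    intro i ω
    rcases hrange i ω with ⟨h0, h1⟩
    rcases hν01 i with ⟨hn0, hn1⟩
    rw [abs_le]; constructor <;> simp [hZ] <;> linarith
  set W : Ω → ℝ := fun ω => ∑ i ∈ s, (Y i ω - ν i) with hW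
  have hWeq : W = ∑ i ∈ s, Z i := by
    funext ω; rw [Finset.sum_apply]
  have hWmeas : Measurable W := by
    apply Finset.measurable_sum
    exact fun i _ => hZmeas i
  have hWbd : ∀ ω, |W ω| ≤ c := by
    intro ω
    calc |W ω| ≤ ∑ i ∈ s, |Z i ω| := Finset.abs_sum_le_sum_abs _ _
      _ ≤ ∑ i ∈ s, 1 := Finset.sum_le_sum (fun i _ => hZbd i ω)
      _ = c := by simp [hc]
  have hint : Integrable (fun ω => exp (lam * W ω)) P := by
    apply int_bdd P _ ((hWmeas.const_mul lam).exp) (exp (lam * c))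
    intro ω
    rw [abs_of_pos (exp_pos _), exp_le_exp]
    have := (abs_le.1 (hWbd ω)).2
    nlinarith
  have hmgf : mgf W P lam ≤ exp (c * (lam ^ 2 / 8)) := by
    rw [hWeq, hZindep.mgf_sum hZmeas s]
    calc ∏ i ∈ s, mgf (Z i) P lam ≤ ∏ i ∈ s, exp (lam ^ 2 / 8) :=
          Finset.prod_le_prod (fun i _ => mgf_nonneg)
            (fun i _ => hoeff_mgf P (Y i) (hmeas i) (hrange i) (ν i) (hmean i) lam hlam0)
      _ = exp (c * (lam ^ 2 / 8)) := by
          rw [Finset.prod_const, ← Real.exp_nat_mul, hc]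
  calc (P {ω | ε ≤ W ω}).toReal ≤ exp (-lam * ε) * mgf W P lam :=
        measure_ge_le_exp_mul_mgf ε hlam0 hint
    _ ≤ exp (-lam * ε) * exp (c * (lam ^ 2 / 8)) :=
        mul_le_mul_of_nonneg_left hmgf (exp_pos _).le
    _ = exp (-2 * ε ^ 2 / c) := by
        rw [← exp_add]
        congr 1
        field_simp [hlam]
        rw [div_mul_cancel₀ _ hc0.ne']
        ring

lemma iIndepFun_precomp {Ω ι ι' : Type*} [MeasurableSpace Ω] {P : Measure Ω}
    {f : ι → Ω → ℝ} (h : iIndepFun f P)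
    (g : ι' → ι) (hg : Function.Injective g) [Nonempty ι'] :
    iIndepFun (fun i => f (g i)) P := by
  classical
  rw [iIndepFun_iff_measure_inter_preimage_eq_mul] at h ⊢
  intro S sets hsets
  have hinv : ∀ i : ι', Function.invFun g (g i) = i :=
    Function.leftInverse_invFun hg
  have hsets'meas : ∀ j ∈ S.image g,
      MeasurableSet ((fun j => sets (Function.invFun g j)) j) := by
    intro j hj
    rcases Finset.mem_image.1 hj with ⟨i, hi, rfl⟩
    simp only [hinv]
    exact hsets i hi
  have key := h (S.image g) (sets := fun j => sets (Function.invFun g j)) hsets'meas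
  have hInter : (⋂ j ∈ S.image g, f j ⁻¹' sets (Function.invFun g j))
      = ⋂ i ∈ S, f (g i) ⁻¹' sets i := by
    ext ω
    simp only [Set.mem_iInter, Finset.mem_image]
    constructor
    · intro hω i hi
      have := hω (g i) ⟨i, hi, rfl⟩
      simpa [hinv] using this
    · rintro hω j ⟨i, hi, rfl⟩
      simp only [hinv]
      exact hω i hi
  have hProd : (∏ j ∈ S.image g, P (f j ⁻¹' sets (Function.invFun g j)))
      = ∏ i ∈ S, P (f (g i) ⁻¹' sets i) := by
    rw [Finset.prod_image (fun i _ j _ hij => hg hij)]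
    apply Finset.prod_congr rfl
    intro i _
    simp only [hinv]
  rw [← hInter, ← hProd]
  simpa using key

lemma gcl_det {K : ℕ} (m : ℝ) {Kk : Type*} [DecidableEq Kk] (μ : Kk → ℝ) (kstar k : Kk)
    (emp : Kk → ℕ → ℝ) (Iω : ℕ → Kk) (Tω : Kk → ℕ → ℕ)
    (hT : ∀ j t, Tω j t = ((Finset.Icc 1 t).filter (fun s => Iω s = j)).card)
    (hinit : ∀ j, Tω j K = 1)
    (hgcl : ∀ t, K < t → ∀ j,
      (Tω (Iω t) (t - 1) : ℝ) * (max (m - emp (Iω t) (Tω (Iω t) (t - 1))) 0) ^ 2 ≤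
        (Tω j (t - 1) : ℝ) * (max (m - emp j (Tω j (t - 1))) 0) ^ 2)
    (n : ℕ) (hn : 2 ≤ n) (β : ℝ) (hβ : 0 < β)
    (hkm : μ kstar = m) (hΔpos : 0 < m - μ k)
    (hΔlog : (m - μ k) ^ 2 ≤ Real.log n)
    (good : ∀ j, ∀ s ∈ Finset.Icc 1 n,
      |emp j s - μ j| < Real.sqrt ((β + 1) * Real.log n / (2 * s)))
    (hthresh : (2 * (β + 1) + 1) * Real.log n / (m - μ k) ^ 2 ≤ (Tω k n : ℝ)) : False := by
  set Δ : ℝ := m - μ k with hΔ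
  have hlogn : 0 < Real.log n := Real.log_pos (by exact_mod_cast hn)
  have hΔ2 : 0 < Δ ^ 2 := by positivity
  set B : ℝ := 2 * (β + 1) * Real.log n / Δ ^ 2 with hB
  have hB0 : 0 < B := by positivity
  have hB2 : 2 ≤ B := by
    have h1 : (1 : ℝ) ≤ Real.log n / Δ ^ 2 := (one_le_div hΔ2).2 hΔlog
    calc (2:ℝ) ≤ 2 * (β + 1) * 1 := by nlinarith
      _ ≤ 2 * (β + 1) * (Real.log n / Δ ^ 2) := by nlinarith
      _ = B := by rw [hB]; ring
  have hratio : (1 : ℝ) ≤ Real.log n / Δ ^ 2 := (one_le_div hΔ2).2 hΔlog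
  have hthresh' : B + 1 ≤ (Tω k n : ℝ) := by
    have : (2 * (β + 1) + 1) * Real.log n / Δ ^ 2 = B + Real.log n / Δ ^ 2 := by
      rw [hB]; ring
    rw [this] at hthresh
    linarith
  have hTkn2 : 2 ≤ Tω k n := by exact_mod_cast (by linarith : (2:ℝ) ≤ (Tω k n : ℝ))
  -- the set of pull times of arm k up to n
  set A : Finset ℕ := (Finset.Icc 1 n).filter (fun s => Iω s = k) with hA
  have hAcard : A.card = Tω k n := (hT k n).symm
  have hAne : A.Nonempty := Finset.card_pos.1 (by omega)
  set t : ℕ := A.max' hAne with htdef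
  have htA : t ∈ A := A.max'_mem hAne
  have htIcc : t ∈ Finset.Icc 1 n := (Finset.mem_filter.1 htA).1
  have htI : Iω t = k := (Finset.mem_filter.1 htA).2
  have htn : t ≤ n := (Finset.mem_Icc.1 htIcc).2
  have hKt : K < t := by
    by_contra hle
    push_neg at hle
    have hsub : A ⊆ (Finset.Icc 1 K).filter (fun s => Iω s = k) := by
      intro s hs
      have hsA := Finset.mem_filter.1 hs
      have hst : s ≤ t := A.le_max' s hs
      refine Finset.mem_filter.2 ⟨Finset.mem_Icc.2 ⟨(Finset.mem_Icc.1 hsA.1).1, le_trans hst hle⟩, hsA.2⟩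
    have := Finset.card_le_card hsub
    rw [← hT k K, hinit k] at this
    omega
  -- T at time t-1
  have hTt : Tω k (t - 1) = Tω k n - 1 := by
    have hset : (Finset.Icc 1 (t - 1)).filter (fun s => Iω s = k) = A.erase t := by
      ext s
      simp only [Finset.mem_filter, Finset.mem_erase, Finset.mem_Icc, hA]
      constructor
      · rintro ⟨⟨h1, h2⟩, h3⟩
        exact ⟨by omega, ⟨h1, by omega⟩, h3⟩
      · rintro ⟨hne, ⟨h1, h2⟩, h3⟩
        have hst : s ≤ t := A.le_max' s (by
          rw [hA]; exact Finset.mem_filter.2 ⟨Finset.mem_Icc.2 ⟨h1, h2⟩, h3⟩)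
        exact ⟨⟨h1, by omega⟩, h3⟩
    rw [hT k (t - 1), hset, Finset.card_erase_of_mem htA, hAcard]
  set s0 : ℕ := Tω k (t - 1) with hs0def
  have hs0B : B ≤ (s0 : ℝ) := by
    have : (s0 : ℝ) = (Tω k n : ℝ) - 1 := by
      rw [hTt, Nat.cast_sub (by omega)]
      simp
    rw [this]; linarith
  have hs01 : 1 ≤ s0 := by
    have : (1:ℝ) ≤ (s0:ℝ) := by linarith
    exact_mod_cast this
  have hs0n : s0 ≤ n := by
    have h1 := hT k (t - 1)
    have hcard : ((Finset.Icc 1 (t-1)).filter (fun s => Iω s = k)).card ≤ t - 1 := by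
      calc ((Finset.Icc 1 (t-1)).filter (fun s => Iω s = k)).card
          ≤ (Finset.Icc 1 (t-1)).card := Finset.card_filter_le _ _
        _ = t - 1 := by rw [Nat.card_Icc]; omega
    omega
  set s1 : ℕ := Tω kstar (t - 1) with hs1def
  have hs11 : 1 ≤ s1 := by
    have hsub : (Finset.Icc 1 K).filter (fun s => Iω s = kstar) ⊆
        (Finset.Icc 1 (t-1)).filter (fun s => Iω s = kstar) := by
      apply Finset.filter_subset_filter
      apply Finset.Icc_subset_Icc le_rfl
      omega
    have := Finset.card_le_card hsub
    rw [← hT kstar K, ← hT kstar (t-1), hinit kstar] at this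
    omega
  have hs1n : s1 ≤ n := by
    have hcard : ((Finset.Icc 1 (t-1)).filter (fun s => Iω s = kstar)).card ≤ t - 1 := by
      calc ((Finset.Icc 1 (t-1)).filter (fun s => Iω s = kstar)).card
          ≤ (Finset.Icc 1 (t-1)).card := Finset.card_filter_le _ _
        _ = t - 1 := by rw [Nat.card_Icc]; omega
    have := hT kstar (t - 1)
    omega
  -- bounds from the good event
  set ε : ℕ → ℝ := fun s => Real.sqrt ((β + 1) * Real.log n / (2 * s)) with hε
  have hgood0 := good k s0 (Finset.mem_Icc.2 ⟨hs01, hs0n⟩)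
  have hgood1 := good kstar s1 (Finset.mem_Icc.2 ⟨hs11, hs1n⟩)
  have hs0pos : (0:ℝ) < s0 := by exact_mod_cast hs01
  have hs1pos : (0:ℝ) < s1 := by exact_mod_cast hs11
  -- ε s0 ≤ Δ / 2
  have hεs0 : ε s0 ≤ Δ / 2 := by
    have harg : (β + 1) * Real.log n / (2 * (s0:ℝ)) ≤ Δ ^ 2 / 4 := by
      have h1 : (β + 1) * Real.log n / (2 * (s0:ℝ)) ≤ (β + 1) * Real.log n / (2 * B) := by
        apply div_le_div_of_nonneg_left (by positivity) (by positivity)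
        linarith
      have h2 : (β + 1) * Real.log n / (2 * B) = Δ ^ 2 / 4 := by
        rw [hB]
        field_simp
        ring
      linarith
    calc ε s0 ≤ Real.sqrt (Δ ^ 2 / 4) := Real.sqrt_le_sqrt harg
      _ = Δ / 2 := by
        rw [show Δ ^ 2 / 4 = (Δ / 2) ^ 2 by ring, Real.sqrt_sq (by linarith)]
  -- lower bound on LHS
  have hlhs : (β + 1) * Real.log n / 2 < (s0 : ℝ) * (max (m - emp k s0) 0) ^ 2 := by
    have hdev : Δ / 2 < m - emp k s0 := by
      have := (abs_lt.1 hgood0).2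
      have h2 : emp k s0 - μ k < ε s0 := this
      have : m - emp k s0 > Δ - ε s0 := by rw [hΔ]; linarith
      linarith
    have hmax : Δ / 2 < max (m - emp k s0) 0 := lt_max_iff.2 (Or.inl hdev)
    have hsq : (Δ / 2) ^ 2 < (max (m - emp k s0) 0) ^ 2 :=
      pow_lt_pow_left₀ hmax (by linarith) (by norm_num)
    calc (β + 1) * Real.log n / 2 = B * (Δ ^ 2 / 4) := by
          rw [hB]; field_simp; ring
      _ ≤ (s0 : ℝ) * (Δ ^ 2 / 4) := by
          apply mul_le_mul_of_nonneg_right hs0B (by positivity)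
      _ = (s0 : ℝ) * (Δ / 2) ^ 2 := by ring
      _ < (s0 : ℝ) * (max (m - emp k s0) 0) ^ 2 := by
          exact mul_lt_mul_of_pos_left hsq hs0pos
  -- upper bound on RHS
  have hrhs : (s1 : ℝ) * (max (m - emp kstar s1) 0) ^ 2 ≤ (β + 1) * Real.log n / 2 := by
    have hdev : m - emp kstar s1 < ε s1 := by
      have := (abs_lt.1 hgood1).1
      rw [hkm] at this
      linarith
    have hmax : max (m - emp kstar s1) 0 ≤ ε s1 :=
      max_le hdev.le (Real.sqrt_nonneg _)
    have hsq : (max (m - emp kstar s1) 0) ^ 2 ≤ (ε s1) ^ 2 :=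
      pow_le_pow_left₀ (le_max_right _ _) hmax 2
    have hεsq : (ε s1) ^ 2 = (β + 1) * Real.log n / (2 * (s1:ℝ)) := by
      rw [hε, Real.sq_sqrt (by positivity)]
    calc (s1 : ℝ) * (max (m - emp kstar s1) 0) ^ 2 ≤ (s1:ℝ) * (ε s1) ^ 2 :=
          mul_le_mul_of_nonneg_left hsq hs1pos.le
      _ = (β + 1) * Real.log n / 2 := by
          rw [hεsq]; field_simp
  have hg := hgcl t hKt kstar
  rw [htI] at hg
  rw [← hs0def, ← hs1def] at hg
  linarith

end Aux

/-- Theorem 5: when the value `m` of the optimal mean reward is known (constant over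
the set `Θ` of possible mean vectors), the GCL* policy satisfies, for every `β > 0`,
`P_θ(T k n ≥ (2(β+1)+1) log n / Δ k²) ≤ 2K / n^β` for all `n ≥ 2` and `k ≠ k*`. -/
theorem stmt14 {Ω : Type*} [MeasurableSpace Ω] (P : Measure Ω) [IsProbabilityMeasure P]
    (K : ℕ) (hK : 2 ≤ K) (β : ℝ) (hβ : 0 < β)
    (X : Fin K → ℕ → Ω → ℝ)
    (hXmeas : ∀ k s, Measurable (X k s))
    (hindep : iIndepFun
      (fun p : Fin K × ℕ => X p.1 p.2) P)
    (hident : ∀ k s, IdentDistrib (X k s) (X k 1) P P)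
    (hrange : ∀ k s ω, X k s ω ∈ Set.Icc (0 : ℝ) 1)
    (μ : Fin K → ℝ) (hmean : ∀ k s, ∫ ω, X k s ω ∂P = μ k)
    -- `μ*` is known: it takes the same value `m` for every environment in `Θ`
    (Θ : Set (Fin K → ℝ)) (m : ℝ)
    (hΘ : ∀ μ' ∈ Θ, ∀ j, μ' j ≤ m ∧ ∃ j', μ' j' = m)
    (hμΘ : μ ∈ Θ)
    (kstar : Fin K) (hkstar : μ kstar = m)
    (hbest : ∀ k, k ≠ kstar → μ k < μ kstar)
    -- empirical means
    (emp : Fin K → ℕ → Ω → ℝ)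
    (hemp : ∀ k s ω, emp k s ω = (1 / (s : ℝ)) * ∑ t ∈ Finset.Icc 1 s, X k t ω)
    -- the GCL* policy
    (I : ℕ → Ω → Fin K) (hImeas : ∀ t, Measurable (I t))
    (T : Fin K → ℕ → Ω → ℕ)
    (hT : ∀ k t ω, T k t ω = ((Finset.Icc 1 t).filter (fun s => I s ω = k)).card)
    -- each arm is pulled exactly once during the first K rounds
    (hinit : ∀ j ω, T j K ω = 1)
    -- GCL* selection rule for t > K
    (hgcl : ∀ t ω, K < t → ∀ j,
      (T (I t ω) (t - 1) ω : ℝ) *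
          (max (m - emp (I t ω) (T (I t ω) (t - 1) ω) ω) 0) ^ 2 ≤
        (T j (t - 1) ω : ℝ) * (max (m - emp j (T j (t - 1) ω) ω) 0) ^ 2) :
    ∀ n : ℕ, 2 ≤ n → ∀ k, k ≠ kstar →
      (P {ω | (2 * (β + 1) + 1) * Real.log n / (μ kstar - μ k) ^ 2 ≤ (T k n ω : ℝ)}).toReal ≤
        2 * K / (n : ℝ) ^ β := by
  intro n hn k hk
  have hn1 : 1 < n := by omega
  have hnpos : (0:ℝ) < n := by exact_mod_cast (by omega : 0 < n)
  have hlogn : 0 < Real.log n := Real.log_pos (by exact_mod_cast hn1)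
  have hμ01 : ∀ j, 0 ≤ μ j ∧ μ j ≤ 1 := by
    intro j
    constructor
    · rw [← hmean j 1]; exact integral_nonneg fun ω => (hrange j 1 ω).1
    · rw [← hmean j 1]
      calc ∫ ω, X j 1 ω ∂P ≤ ∫ _, (1:ℝ) ∂P := integral_mono
            (int_bdd P _ (hXmeas j 1) 1 (fun ω => by
              rcases hrange j 1 ω with ⟨h0, h1⟩; rw [abs_le]; exact ⟨by linarith, h1⟩))
            (integrable_const 1) (fun ω => (hrange j 1 ω).2)
        _ = 1 := by simp
  have hΔpos : 0 < μ kstar - μ k := sub_pos.2 (hbest k hk)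
  have hmΔpos : 0 < m - μ k := hkstar ▸ hΔpos
  have hΔ1 : μ kstar - μ k ≤ 1 := by
    have h1 := hμ01 kstar; have h2 := hμ01 k; linarith [h1.2, h2.1]
  by_cases hcase : (μ kstar - μ k) ^ 2 ≤ Real.log n
  · -- main case
    set Aset : Fin K → ℕ → Set Ω := fun j s =>
      {ω | (s:ℝ) * Real.sqrt ((β + 1) * Real.log n / (2 * s)) ≤
        ∑ t ∈ Finset.Icc 1 s, (X j t ω - μ j)} with hAdef
    set Bset : Fin K → ℕ → Set Ω := fun j s =>
      {ω | (s:ℝ) * Real.sqrt ((β + 1) * Real.log n / (2 * s)) ≤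
        ∑ t ∈ Finset.Icc 1 s, ((1 - X j t ω) - (1 - μ j))} with hBdef
    have hsub : {ω | (2 * (β + 1) + 1) * Real.log n / (μ kstar - μ k) ^ 2 ≤ (T k n ω : ℝ)}
        ⊆ ⋃ j ∈ (Finset.univ : Finset (Fin K)), ⋃ s ∈ Finset.Icc 1 n, (Aset j s ∪ Bset j s) := by
      intro ω hω
      by_contra hnot
      have good : ∀ j, ∀ s ∈ Finset.Icc 1 n,
          |emp j s ω - μ j| < Real.sqrt ((β + 1) * Real.log n / (2 * s)) := by
        intro j s hs
        have hs1 : 1 ≤ s := (Finset.mem_Icc.1 hs).1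
        have hspos : (0:ℝ) < s := by exact_mod_cast hs1
        have hmemAB : ω ∉ Aset j s ∪ Bset j s := fun hc =>
          hnot (Set.mem_iUnion₂.2 ⟨j, Finset.mem_univ j, Set.mem_iUnion₂.2 ⟨s, hs, hc⟩⟩)
        rw [Set.mem_union, not_or] at hmemAB
        obtain ⟨hnA, hnB⟩ := hmemAB
        have hA' : ∑ t ∈ Finset.Icc 1 s, (X j t ω - μ j)
            < (s:ℝ) * Real.sqrt ((β + 1) * Real.log n / (2 * s)) := by
          by_contra hc
          exact hnA (by push_neg at hc; exact hc)
        have hB' : ∑ t ∈ Finset.Icc 1 s, ((1 - X j t ω) - (1 - μ j))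
            < (s:ℝ) * Real.sqrt ((β + 1) * Real.log n / (2 * s)) := by
          by_contra hc
          exact hnB (by push_neg at hc; exact hc)
        have hcard : (Finset.Icc 1 s).card = s := by rw [Nat.card_Icc]; omega
        have hsumX : ∑ t ∈ Finset.Icc 1 s, (X j t ω - μ j)
            = (s:ℝ) * (emp j s ω - μ j) := by
          rw [hemp j s ω, Finset.sum_sub_distrib, Finset.sum_const, hcard, nsmul_eq_mul]
          field_simp
        have hsumB : ∑ t ∈ Finset.Icc 1 s, ((1 - X j t ω) - (1 - μ j))
            = -((s:ℝ) * (emp j s ω - μ j)) := by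
          rw [← hsumX, ← Finset.sum_neg_distrib]
          apply Finset.sum_congr rfl
          intros; ring
        rw [hsumX] at hA'
        rw [hsumB] at hB'
        have h1 : emp j s ω - μ j < Real.sqrt ((β + 1) * Real.log n / (2 * s)) :=
          (mul_lt_mul_iff_right₀ hspos).1 hA'
        have h2 : -(emp j s ω - μ j) < Real.sqrt ((β + 1) * Real.log n / (2 * s)) := by
          have : (s:ℝ) * (-(emp j s ω - μ j)) < (s:ℝ) * Real.sqrt ((β + 1) * Real.log n / (2 * s)) := by
            rw [mul_neg]; linarith
          exact (mul_lt_mul_iff_right₀ hspos).1 this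
        rw [abs_lt]
        exact ⟨by linarith, h1⟩
      simp only [Set.mem_setOf_eq] at hω
      rw [show μ kstar = m from hkstar] at hω
      rw [show μ kstar = m from hkstar] at hcase
      exact gcl_det (K := K) m μ kstar k (fun j s => emp j s ω) (fun t => I t ω)
        (fun j t => T j t ω) (fun j t => hT j t ω) (fun j => hinit j ω)
        (fun t ht j => hgcl t ω ht j) n hn β hβ hkstar hmΔpos hcase good hω
    -- probability bounds
    have hArm : ∀ j : Fin K, iIndepFun (fun t : ℕ => X j t) P := by
      intro j
      have hinj : Function.Injective (fun t : ℕ => ((j, t) : Fin K × ℕ)) :=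
        fun a b hab => congrArg Prod.snd hab
      exact iIndepFun_precomp hindep _ hinj
    set r : ℝ := Real.exp (Real.log n * (-(β + 1))) with hrdef
    have hr0 : 0 ≤ r := (Real.exp_pos _).le
    have hPA : ∀ j : Fin K, ∀ s ∈ Finset.Icc 1 n, (P (Aset j s)).toReal ≤ r := by
      intro j s hs
      obtain ⟨hs1, hsn⟩ := Finset.mem_Icc.1 hs
      have hspos : (0:ℝ) < s := by exact_mod_cast hs1
      have hcard : (Finset.Icc 1 s).card = s := by rw [Nat.card_Icc]; omega
      have hchern := chernoff_sum P (fun t => X j t) (fun t => hXmeas j t) (hArm j)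
        (fun t ω => hrange j t ω) (fun _ => μ j) (fun t => hmean j t)
        (Finset.Icc 1 s) (by rw [hcard]; omega)
        ((s:ℝ) * Real.sqrt ((β + 1) * Real.log n / (2 * s))) (by positivity)
      have hexp2 : -2 * ((s:ℝ) * Real.sqrt ((β + 1) * Real.log n / (2 * s))) ^ 2
          / (((Finset.Icc 1 s).card : ℕ) : ℝ) = Real.log n * (-(β + 1)) := by
        rw [hcard, mul_pow, Real.sq_sqrt (by positivity)]
        field_simp
      rw [hexp2] at hchern
      exact hchern
    have hPB : ∀ j : Fin K, ∀ s ∈ Finset.Icc 1 n, (P (Bset j s)).toReal ≤ r := by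
      intro j s hs
      obtain ⟨hs1, hsn⟩ := Finset.mem_Icc.1 hs
      have hspos : (0:ℝ) < s := by exact_mod_cast hs1
      have hcard : (Finset.Icc 1 s).card = s := by rw [Nat.card_Icc]; omega
      have hchern := chernoff_sum P (fun t ω => 1 - X j t ω)
        (fun t => measurable_const.sub (hXmeas j t))
        ((hArm j).comp (fun t x => 1 - x) (fun t => measurable_const.sub measurable_id))
        (fun t ω => by
          rcases hrange j t ω with ⟨h0, h1⟩
          simp only [Set.mem_Icc]
          constructor <;> linarith)
        (fun _ => 1 - μ j)
        (fun t => by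
          rw [integral_sub (integrable_const 1)
            (int_bdd P _ (hXmeas j t) 1 (fun ω => by
              rcases hrange j t ω with ⟨h0, h1⟩; rw [abs_le]; exact ⟨by linarith, h1⟩)),
            hmean j t]
          simp)
        (Finset.Icc 1 s) (by rw [hcard]; omega)
        ((s:ℝ) * Real.sqrt ((β + 1) * Real.log n / (2 * s))) (by positivity)
      have hexp2 : -2 * ((s:ℝ) * Real.sqrt ((β + 1) * Real.log n / (2 * s))) ^ 2
          / (((Finset.Icc 1 s).card : ℕ) : ℝ) = Real.log n * (-(β + 1)) := by
        rw [hcard, mul_pow, Real.sq_sqrt (by positivity)]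
        field_simp
      rw [hexp2] at hchern
      exact hchern
    have hmain : P {ω | (2 * (β + 1) + 1) * Real.log n / (μ kstar - μ k) ^ 2 ≤ (T k n ω : ℝ)}
        ≤ ENNReal.ofReal ((K:ℝ) * ((n:ℝ) * (r + r))) := by
      calc P {ω | (2 * (β + 1) + 1) * Real.log n / (μ kstar - μ k) ^ 2 ≤ (T k n ω : ℝ)}
          ≤ P (⋃ j ∈ (Finset.univ : Finset (Fin K)), ⋃ s ∈ Finset.Icc 1 n,
              (Aset j s ∪ Bset j s)) := measure_mono hsub
        _ ≤ ∑ j ∈ Finset.univ, P (⋃ s ∈ Finset.Icc 1 n, (Aset j s ∪ Bset j s)) :=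
            measure_biUnion_finset_le _ _
        _ ≤ ∑ j ∈ Finset.univ, ∑ s ∈ Finset.Icc 1 n, P (Aset j s ∪ Bset j s) :=
            Finset.sum_le_sum (fun j _ => measure_biUnion_finset_le _ _)
        _ ≤ ∑ _j ∈ (Finset.univ : Finset (Fin K)), ∑ _s ∈ Finset.Icc 1 n,
              ENNReal.ofReal (r + r) := by
            apply Finset.sum_le_sum; intro j _
            apply Finset.sum_le_sum; intro s hs
            calc P (Aset j s ∪ Bset j s) ≤ P (Aset j s) + P (Bset j s) :=
                  measure_union_le _ _
              _ ≤ ENNReal.ofReal r + ENNReal.ofReal r := add_le_add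
                  ((ENNReal.le_ofReal_iff_toReal_le (measure_ne_top P _) hr0).2 (hPA j s hs))
                  ((ENNReal.le_ofReal_iff_toReal_le (measure_ne_top P _) hr0).2 (hPB j s hs))
              _ = ENNReal.ofReal (r + r) := (ENNReal.ofReal_add hr0 hr0).symm
        _ = ENNReal.ofReal ((K:ℝ) * ((n:ℝ) * (r + r))) := by
            rw [Finset.sum_const, Finset.sum_const, Finset.card_univ, Fintype.card_fin,
              Nat.card_Icc, show n + 1 - 1 = n from by omega, nsmul_eq_mul, nsmul_eq_mul,
              ← ENNReal.ofReal_natCast n, ← ENNReal.ofReal_natCast K,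
              ← ENNReal.ofReal_mul (by positivity), ← ENNReal.ofReal_mul (by positivity)]
    have hrval : (K:ℝ) * ((n:ℝ) * (r + r)) = 2 * K / (n : ℝ) ^ β := by
      have h1 : r = (n:ℝ) ^ (-(β + 1)) := by
        rw [hrdef, Real.rpow_def_of_pos hnpos]
      have h2 : (n:ℝ) * (n:ℝ) ^ (-(β + 1)) = (n:ℝ) ^ (-β) := by
        have h3 : (-β) = 1 + (-(β + 1)) := by ring
        rw [h3, Real.rpow_add hnpos, Real.rpow_one]
      have h4 : (n:ℝ) ^ (-β) = ((n:ℝ) ^ β)⁻¹ := Real.rpow_neg hnpos.le β ▸ rfl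
      rw [h1]
      have h5 : (K:ℝ) * ((n:ℝ) * ((n:ℝ) ^ (-(β+1)) + (n:ℝ) ^ (-(β+1))))
          = 2 * K * ((n:ℝ) * (n:ℝ) ^ (-(β+1))) := by ring
      rw [h5, h2, h4]
      rw [div_eq_mul_inv]
    calc (P {ω | (2 * (β + 1) + 1) * Real.log n / (μ kstar - μ k) ^ 2 ≤ (T k n ω : ℝ)}).toReal
        ≤ (K:ℝ) * ((n:ℝ) * (r + r)) :=
          ENNReal.toReal_le_of_le_ofReal (by positivity) hmain
      _ = 2 * K / (n : ℝ) ^ β := hrval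
  · -- degenerate case : n = 2 and the event is empty
    push_neg at hcase
    have hΔsq1 : (μ kstar - μ k) ^ 2 ≤ 1 := by nlinarith
    have hlog1 : Real.log n < 1 := lt_of_lt_of_le hcase hΔsq1
    have hn3 : (n:ℝ) < 3 := by
      have h1 : (n:ℝ) = Real.exp (Real.log n) := (Real.exp_log hnpos).symm
      rw [h1]
      calc Real.exp (Real.log n) < Real.exp 1 := Real.exp_lt_exp.2 hlog1
        _ < 2.7182818286 := Real.exp_one_lt_d9
        _ < 3 := by norm_num
    have hn2 : n = 2 := by
      have : n < 3 := by exact_mod_cast hn3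
      omega
    have hempty : {ω | (2 * (β + 1) + 1) * Real.log n / (μ kstar - μ k) ^ 2 ≤ (T k n ω : ℝ)}
        = (∅ : Set Ω) := by
      rw [Set.eq_empty_iff_forall_notMem]
      intro ω hω
      simp only [Set.mem_setOf_eq] at hω
      have hTle : T k n ω ≤ n := by
        rw [hT]
        calc ((Finset.Icc 1 n).filter (fun s => I s ω = k)).card
            ≤ (Finset.Icc 1 n).card := Finset.card_filter_le _ _
          _ = n := by rw [Nat.card_Icc]; omega
      have hTle' : (T k n ω : ℝ) ≤ (n:ℝ) := by exact_mod_cast hTle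
      have hncast : (n:ℝ) = 2 := by rw [hn2]; norm_num
      have hlogn2 : Real.log n = Real.log 2 := by rw [hncast]
      have hlog2 : (0.6931471803 : ℝ) < Real.log 2 := Real.log_two_gt_d9
      have hΔsq0 : 0 < (μ kstar - μ k) ^ 2 := by positivity
      have hb1 : (2:ℝ) < (2 * (β + 1) + 1) * Real.log 2 := by nlinarith
      have hb2 : (2 * (β + 1) + 1) * Real.log 2
          ≤ (2 * (β + 1) + 1) * Real.log 2 / (μ kstar - μ k) ^ 2 := by
        rw [le_div_iff₀ hΔsq0]
        nlinarith
      rw [hlogn2] at hω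
      linarith [hω, hTle', hncast ▸ hTle']
    rw [hempty]
    simp only [measure_empty, ENNReal.toReal_zero]
    positivity
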